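/- Let w_1,…,w_m ∈ ℝ and λ > 0, and let J be a random index in {1,…,m} with P(J = j) = exp(−λ·w_j) / Σ_{j'=1}^m exp(−λ·w_{j'}). Then for every δ ∈ (0,1), P( w_J ≥ min_{1≤j≤m} w_j + log(m/δ)/λ ) ≤ δ. -/

import Mathlib

open MeasureTheory ProbabilityTheory

/-- **Utility (accuracy) guarantee of the exponential mechanism** over a finite
candidate set: if `J` is drawn with probability proportional to `exp(-λ·w j)`, then
with probability at least `1 - δ` the selected weight `w J` exceeds the minimal weight
by at most `log(m/δ)/λ`, where `m` is the number of candidates. -/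
theorem exponential_mechanism_utility
    {Ω ι : Type*} [MeasurableSpace Ω] (P : Measure Ω) [IsProbabilityMeasure P]
    [Fintype ι] [Nonempty ι]
    (w : ι → ℝ) (lam : ℝ) (hlam : 0 < lam)
    (J : Ω → ι)
    (hJ : ∀ j : ι, P {ω | J ω = j} =
      ENNReal.ofReal (Real.exp (-lam * w j) / ∑ j' : ι, Real.exp (-lam * w j')))
    (δ : ℝ) (hδ : δ ∈ Set.Ioo (0 : ℝ) 1) :
    P {ω | (⨅ j, w j) + Real.log ((Fintype.card ι : ℝ) / δ) / lam ≤ w (J ω)} ≤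
      ENNReal.ofReal δ := by
  obtain ⟨hδ0, hδ1⟩ := hδ
  have hm : (0 : ℝ) < (Fintype.card ι : ℝ) := by
    exact_mod_cast Fintype.card_pos
  set m : ℝ := (Fintype.card ι : ℝ) with hmdef
  set t : ℝ := (⨅ j, w j) + Real.log (m / δ) / lam with htdef
  obtain ⟨j0, hj0⟩ := exists_eq_ciInf_of_finite (f := w)
  have hsum : Real.exp (-lam * w j0) ≤ ∑ j' : ι, Real.exp (-lam * w j') :=
    Finset.single_le_sum (f := fun j' => Real.exp (-lam * w j')) (fun i _ => (Real.exp_pos _).le) (Finset.mem_univ j0)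
  have hδm : (0 : ℝ) < δ / m := div_pos hδ0 hm
  have key : ∀ j : ι, t ≤ w j →
      Real.exp (-lam * w j) / (∑ j' : ι, Real.exp (-lam * w j')) ≤ δ / m := by
    intro j hj
    have h1 : Real.exp (-lam * w j) ≤ Real.exp (-lam * w j0) * (δ / m) := by
      have hlog : Real.log (m / δ) = - Real.log (δ / m) := by
        rw [← Real.log_inv, inv_div]
      have hwj : w j0 + Real.log (m / δ) / lam ≤ w j := by
        rw [hj0]; exact hj
      have : -lam * w j ≤ -lam * w j0 + Real.log (δ / m) := by
        have := mul_le_mul_of_nonneg_left hwj (le_of_lt hlam)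
        rw [mul_add, mul_div_cancel₀ _ (ne_of_gt hlam), hlog] at this
        nlinarith
      calc Real.exp (-lam * w j) ≤ Real.exp (-lam * w j0 + Real.log (δ / m)) :=
            Real.exp_le_exp.mpr this
        _ = Real.exp (-lam * w j0) * (δ / m) := by
            rw [Real.exp_add, Real.exp_log hδm]
    calc Real.exp (-lam * w j) / (∑ j' : ι, Real.exp (-lam * w j'))
        ≤ Real.exp (-lam * w j) / Real.exp (-lam * w j0) :=
          div_le_div_of_nonneg_left (Real.exp_pos _).le (Real.exp_pos _) hsum
      _ ≤ δ / m := by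
          rw [div_le_iff₀ (Real.exp_pos _)]
          linarith [h1]
  set S : Finset ι := Finset.univ.filter (fun j => t ≤ w j) with hS
  have hset : {ω | t ≤ w (J ω)} = ⋃ j ∈ S, {ω | J ω = j} := by
    ext ω
    simp only [Set.mem_setOf_eq, Set.mem_iUnion, hS, Finset.mem_filter,
      Finset.mem_univ, true_and]
    constructor
    · intro h; exact ⟨J ω, h, rfl⟩
    · rintro ⟨j, hj, rfl⟩; exact hj
  calc P {ω | t ≤ w (J ω)}
      ≤ ∑ j ∈ S, P {ω | J ω = j} := by
        rw [hset]; exact measure_biUnion_finset_le _ _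
    _ ≤ ∑ j ∈ S, ENNReal.ofReal (δ / m) := by
        refine Finset.sum_le_sum fun j hj => ?_
        rw [hJ j]
        exact ENNReal.ofReal_le_ofReal (key j (by simpa [hS] using hj))
    _ = S.card * ENNReal.ofReal (δ / m) := by
        rw [Finset.sum_const, nsmul_eq_mul]
    _ ≤ (Fintype.card ι : ENNReal) * ENNReal.ofReal (δ / m) := by
        gcongr
        exact_mod_cast Finset.card_filter_le _ _
    _ = ENNReal.ofReal δ := by
        rw [← ENNReal.ofReal_natCast, ← ENNReal.ofReal_mul (by positivity)]
        congr 1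
        field_simp
        exact hmdef.symm
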